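/- arXiv:2108.10202 — 2 statements merged into one kernel-verified Lean document; each statement's English description precedes it below -/
import Mathlib

section
/- The Demazure operators π̃ᵢ on ℚ(x₁,…,xₙ) satisfy the braid relation π̃ᵢ π̃_{i+1} π̃ᵢ = π̃_{i+1} π̃ᵢ π̃_{i+1} for 1 ≤ i ≤ n−2. -/
open MvPolynomial

/-- The rational function field `ℚ(x₁, …, xₙ)`. -/
abbrev Kf (n : ℕ) := FractionRing (MvPolynomial (Fin n) ℚ)

/-- The variable `xᵢ` as an element of `ℚ(x₁, …, xₙ)`. -/
noncomputable def Xf (n : ℕ) (i : Fin n) : Kf n :=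
  algebraMap (MvPolynomial (Fin n) ℚ) (Kf n) (MvPolynomial.X i)

/-- The field automorphism of `ℚ(x₁, …, xₙ)` exchanging the variables `xᵢ` and `xⱼ`. -/
noncomputable def swapf (n : ℕ) (i j : Fin n) : Kf n ≃+* Kf n :=
  IsFractionRing.ringEquivOfRingEquiv
    (MvPolynomial.renameEquiv ℚ (Equiv.swap i j)).toRingEquiv

/-- The divided difference operator `Aᵢⱼ f = (f - sᵢⱼ f)/(xᵢ - xⱼ)`. -/
noncomputable def Af (n : ℕ) (i j : Fin n) (f : Kf n) : Kf n :=
  (f - swapf n i j f) / (Xf n i - Xf n j)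

/-- The Demazure operator `π̃ᵢ = Aᵢ ∘ (1 - x_{i+1})` (here with indices `i, j`). -/
noncomputable def pitf (n : ℕ) (i j : Fin n) (f : Kf n) : Kf n :=
  Af n i j ((1 - Xf n j) * f)

noncomputable def permf (n : ℕ) (σ : Equiv.Perm (Fin n)) : Kf n ≃+* Kf n :=
  IsFractionRing.ringEquivOfRingEquiv (MvPolynomial.renameEquiv ℚ σ).toRingEquiv

lemma swapf_eq_permf (n : ℕ) (i j : Fin n) : swapf n i j = permf n (Equiv.swap i j) := rfl

lemma permf_X (n : ℕ) (σ : Equiv.Perm (Fin n)) (k : Fin n) :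
    permf n σ (Xf n k) = Xf n (σ k) := by
  unfold permf Xf
  rw [IsFractionRing.ringEquivOfRingEquiv_algebraMap]
  simp

lemma permf_permf (n : ℕ) (σ τ : Equiv.Perm (Fin n)) (f : Kf n) :
    permf n σ (permf n τ f) = permf n (σ * τ) f := by
  have : ((permf n σ).toRingHom.comp (permf n τ).toRingHom) = (permf n (σ * τ)).toRingHom := by
    apply IsLocalization.ringHom_ext (nonZeroDivisors (MvPolynomial (Fin n) ℚ))
    ext p
    all_goals
      simp only [RingHom.comp_apply, RingEquiv.toRingHom_eq_coe, RingHom.coe_coe]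
      unfold permf
      rw [IsFractionRing.ringEquivOfRingEquiv_algebraMap, IsFractionRing.ringEquivOfRingEquiv_algebraMap,
        IsFractionRing.ringEquivOfRingEquiv_algebraMap]
      simp [MvPolynomial.rename_rename]
  exact congrFun (congrArg DFunLike.coe this) f

lemma permf_one (n : ℕ) (f : Kf n) : permf n 1 f = f := by
  have : (permf n 1).toRingHom = RingHom.id (Kf n) := by
    apply IsLocalization.ringHom_ext (nonZeroDivisors (MvPolynomial (Fin n) ℚ))
    ext p
    all_goals
      simp only [RingHom.comp_apply, RingEquiv.toRingHom_eq_coe, RingHom.coe_coe,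
        RingHom.id_apply]
      unfold permf
      rw [IsFractionRing.ringEquivOfRingEquiv_algebraMap]
      simp
  exact congrFun (congrArg DFunLike.coe this) f

lemma Xf_sub_ne (n : ℕ) {i j : Fin n} (h : i ≠ j) : Xf n i - Xf n j ≠ 0 := by
  rw [sub_ne_zero]
  unfold Xf
  intro hc
  exact h (MvPolynomial.X_injective (IsFractionRing.injective _ _ hc))

set_option maxHeartbeats 1000000 in
lemma braid_lhs {K : Type*} [Field K] (A B C F0 F1 F2 F3 F4 F5 : K)
    (hAB : A - B ≠ 0) (hBC : B - C ≠ 0) (hAC : A - C ≠ 0) :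
    ((1 - B) *
          (((1 - C) * (((1 - B) * F0 - (1 - A) * F1) / (A - B)) -
              (1 - B) * (((1 - C) * F2 - (1 - A) * F4) / (A - C))) /
            (B - C)) -
        (1 - A) *
          (((1 - C) * (((1 - A) * F1 - (1 - B) * F0) / (B - A)) -
              (1 - A) * (((1 - C) * F3 - (1 - B) * F5) / (B - C))) /
            (A - C))) /
      (A - B) =
    ((B-1)*(C-1)^2*F0 - (A-1)*(C-1)^2*F1 - (B-1)^2*(C-1)*F2 + (A-1)^2*(C-1)*F3
      + (A-1)*(B-1)^2*F4 - (A-1)^2*(B-1)*F5) / ((A-B)*(B-C)*(C-A)) := by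
  have hBA : B - A ≠ 0 := fun h => hAB (by linear_combination -h)
  have hCA : C - A ≠ 0 := fun h => hAC (by linear_combination -h)
  field_simp
  ring


set_option maxHeartbeats 1000000 in
lemma braid_rhs {K : Type*} [Field K] (A B C F0 F1 F2 F3 F4 F5 : K)
    (hAB : A - B ≠ 0) (hBC : B - C ≠ 0) (hAC : A - C ≠ 0) :
    ((1 - C) *
          (((1 - B) * (((1 - C) * F0 - (1 - B) * F2) / (B - C)) -
              (1 - A) * (((1 - C) * F1 - (1 - A) * F3) / (A - C))) /
            (A - B)) -
        (1 - B) *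
          (((1 - C) * (((1 - B) * F2 - (1 - C) * F0) / (C - B)) -
              (1 - A) * (((1 - B) * F4 - (1 - A) * F5) / (A - B))) /
            (A - C))) /
      (B - C) =
    ((B-1)*(C-1)^2*F0 - (A-1)*(C-1)^2*F1 - (B-1)^2*(C-1)*F2 + (A-1)^2*(C-1)*F3
      + (A-1)*(B-1)^2*F4 - (A-1)^2*(B-1)*F5) / ((A-B)*(B-C)*(C-A)) := by
  have hBA : B - A ≠ 0 := fun h => hAB (by linear_combination -h)
  have hCA : C - A ≠ 0 := fun h => hAC (by linear_combination -h)
  have hCB : C - B ≠ 0 := fun h => hBC (by linear_combination -h)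
  field_simp
  ring

/-- The Demazure operators `π̃ᵢ` on `ℚ(x₁,…,xₙ)` satisfy the braid relation
`π̃ᵢ π̃_{i+1} π̃ᵢ = π̃_{i+1} π̃ᵢ π̃_{i+1}`. -/
theorem pitf_braid (n : ℕ) (i : ℕ) (h : i + 2 < n) (f : Kf n) :
    pitf n ⟨i, by omega⟩ ⟨i + 1, by omega⟩
        (pitf n ⟨i + 1, by omega⟩ ⟨i + 2, h⟩
          (pitf n ⟨i, by omega⟩ ⟨i + 1, by omega⟩ f))
      = pitf n ⟨i + 1, by omega⟩ ⟨i + 2, h⟩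
          (pitf n ⟨i, by omega⟩ ⟨i + 1, by omega⟩
            (pitf n ⟨i + 1, by omega⟩ ⟨i + 2, h⟩ f)) := by
  set a : Fin n := ⟨i, by omega⟩ with ha
  set b : Fin n := ⟨i + 1, by omega⟩ with hb
  set c : Fin n := ⟨i + 2, h⟩ with hc
  have hab : a ≠ b := by simp [ha, hb, Fin.ext_iff]
  have hbc : b ≠ c := by simp [hb, hc, Fin.ext_iff]
  have hac : a ≠ c := by simp [ha, hc, Fin.ext_iff]
  simp only [pitf, Af, swapf_eq_permf]
  simp only [map_sub, map_mul, map_one, map_div₀, permf_permf, permf_X, Equiv.Perm.mul_apply]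
  have hb1 : Equiv.swap b c * (Equiv.swap a b * Equiv.swap b c) = Equiv.swap c a := by
    rw [← mul_assoc]; exact Equiv.swap_mul_swap_mul_swap hab hac
  have hb2 : Equiv.swap a b * (Equiv.swap b c * Equiv.swap a b) = Equiv.swap c a := by
    rw [← mul_assoc, Equiv.swap_comm a b, Equiv.swap_comm b c,
      Equiv.swap_mul_swap_mul_swap hbc.symm hac.symm, Equiv.swap_comm]
  simp only [Equiv.swap_apply_left, Equiv.swap_apply_right,
    Equiv.swap_apply_of_ne_of_ne hab hac, Equiv.swap_apply_of_ne_of_ne hac.symm hbc.symm,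
    Equiv.swap_mul_self, permf_one, hb1, hb2]
  exact (braid_lhs (Xf n a) (Xf n b) (Xf n c) f
      (permf n (Equiv.swap a b) f) (permf n (Equiv.swap b c) f)
      (permf n (Equiv.swap a b * Equiv.swap b c) f)
      (permf n (Equiv.swap b c * Equiv.swap a b) f)
      (permf n (Equiv.swap c a) f)
      (Xf_sub_ne n hab) (Xf_sub_ne n hbc) (Xf_sub_ne n hac)).trans
    (braid_rhs (Xf n a) (Xf n b) (Xf n c) f
      (permf n (Equiv.swap a b) f) (permf n (Equiv.swap b c) f)
      (permf n (Equiv.swap a b * Equiv.swap b c) f)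
      (permf n (Equiv.swap b c * Equiv.swap a b) f)
      (permf n (Equiv.swap c a) f)
      (Xf_sub_ne n hab) (Xf_sub_ne n hbc) (Xf_sub_ne n hac)).symm
end

section
/- For each n ≥ 1, the signed sum of Grothendieck polynomials over S_n satisfies ∑_{w ∈ S_n} (−1)^{ℓ(w)} 𝔊_w = ∏_{i=1}^{n−1} (1 − xᵢ)^{n−i}. -/
open MvPolynomial

/-- The Coxeter length of a permutation of `Fin n`: the number of inversions. -/
def lenf (n : ℕ) (w : Equiv.Perm (Fin n)) : ℕ :=
  (Finset.univ.filter (fun p : Fin n × Fin n => p.1 < p.2 ∧ w p.2 < w p.1)).card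

namespace SSG

variable {n : ℕ}

noncomputable abbrev φ (n : ℕ) : MvPolynomial (Fin n) ℚ →+* Kf n :=
  algebraMap (MvPolynomial (Fin n) ℚ) (Kf n)

lemma φ_inj : Function.Injective (φ n) := IsFractionRing.injective _ _

lemma swapf_algebraMap (i j : Fin n) (f : MvPolynomial (Fin n) ℚ) :
    swapf n i j (φ n f) = φ n (rename (Equiv.swap i j) f) :=
  IsFractionRing.ringEquivOfRingEquiv_algebraMap _ f

lemma Xf_eq (i : Fin n) : Xf n i = φ n (X i) := rfl

lemma swapf_Xf (i j k : Fin n) : swapf n i j (Xf n k) = Xf n (Equiv.swap i j k) := by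
  rw [Xf_eq, swapf_algebraMap, rename_X, Xf_eq]

lemma swapf_poly_poly (i j : Fin n) (f : MvPolynomial (Fin n) ℚ) :
    swapf n i j (swapf n i j (φ n f)) = φ n f := by
  rw [swapf_algebraMap, swapf_algebraMap, rename_rename]
  have h : (⇑(Equiv.swap i j) ∘ ⇑(Equiv.swap i j)) = id := by
    funext x; simp [Equiv.swap_apply_self]
  rw [h, rename_id, AlgHom.id_apply]

lemma swapf_swapf (i j : Fin n) (f : Kf n) : swapf n i j (swapf n i j f) = f := by
  obtain ⟨a, b, hb, rfl⟩ := IsFractionRing.div_surjective (A := MvPolynomial (Fin n) ℚ) f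
  rw [map_div₀, map_div₀, swapf_poly_poly, swapf_poly_poly]

lemma Xf_sub_ne (i j : Fin n) (h : i ≠ j) : Xf n i - Xf n j ≠ 0 := by
  rw [Xf_eq, Xf_eq, ← map_sub]
  intro hc
  have := φ_inj (by rw [hc, map_zero] : φ n (X i - X j) = φ n 0)
  exact (sub_ne_zero.2 (X_injective.ne h)) this

/-! ### The key pairing identity in `Kf n` -/

lemma swapf_num (i j : Fin n) (g : Kf n) :
    swapf n i j ((1 - Xf n j) * g) = (1 - Xf n i) * swapf n i j g := by
  rw [map_mul, map_sub, map_one, swapf_Xf, Equiv.swap_apply_right]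

lemma pair_key (i j : Fin n) (hij : i ≠ j) (g : Kf n) :
    (1 - Xf n j) * (pitf n i j g - g)
      = (1 - Xf n i) * swapf n i j (pitf n i j g - g) := by
  have hP : pitf n i j g
      = ((1 - Xf n j) * g - (1 - Xf n i) * swapf n i j g) / (Xf n i - Xf n j) := by
    rw [pitf, Af, swapf_num]
  have hxy : Xf n i - Xf n j ≠ 0 := Xf_sub_ne i j hij
  have hPs : swapf n i j (pitf n i j g) = pitf n i j g := by
    rw [hP]
    simp only [map_div₀, map_sub, map_mul, map_one, swapf_Xf, Equiv.swap_apply_left,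
      Equiv.swap_apply_right, swapf_swapf]
    show ((1 - Xf n i) * swapf n i j g - (1 - Xf n j) * g) / (Xf n j - Xf n i) = _
    rw [← neg_sub ((1 - Xf n j) * g), ← neg_sub (Xf n i) (Xf n j), neg_div_neg_eq]
  have hmul : (Xf n i - Xf n j) * pitf n i j g
      = (1 - Xf n j) * g - (1 - Xf n i) * swapf n i j g := by
    rw [hP, mul_div_cancel₀ _ hxy]
  rw [map_sub, hPs]
  linear_combination hmul

/-! ### Length combinatorics -/

lemma swap_ord {a b : Fin n} (hab : (a : ℕ) + 1 = (b : ℕ)) :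
    ∀ {p q : Fin n}, p < q → ¬(p = a ∧ q = b) → Equiv.swap a b p < Equiv.swap a b q := by
  intro p q hpq hne
  have hq' : (p : ℕ) < (q : ℕ) := hpq
  by_cases hpa : p = a
  · have hqb : q ≠ b := fun h => hne ⟨hpa, h⟩
    have hqa : q ≠ a := by rw [← hpa]; exact (ne_of_gt hpq)
    rw [hpa, Equiv.swap_apply_left, Equiv.swap_apply_of_ne_of_ne hqa hqb]
    have h1 : (q : ℕ) ≠ (b : ℕ) := fun h => hqb (Fin.ext h)
    have h2 : (a : ℕ) < (q : ℕ) := by rw [← hpa]; exact hq'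
    exact Fin.lt_def.2 (by omega)
  · by_cases hpb : p = b
    · have hqa : q ≠ a := fun h => by
        rw [hpb, h] at hq'; omega
      have hqb : q ≠ b := ne_of_gt (hpb ▸ hpq)
      rw [hpb, Equiv.swap_apply_right, Equiv.swap_apply_of_ne_of_ne hqa hqb]
      have : (b : ℕ) < (q : ℕ) := hpb ▸ hq'
      exact Fin.lt_def.2 (by omega)
    · by_cases hqa : q = a
      · rw [hqa, Equiv.swap_apply_left, Equiv.swap_apply_of_ne_of_ne hpa hpb]
        have : (p : ℕ) < (a : ℕ) := hqa ▸ hq'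
        exact Fin.lt_def.2 (by omega)
      · by_cases hqb : q = b
        · rw [hqb, Equiv.swap_apply_right, Equiv.swap_apply_of_ne_of_ne hpa hpb]
          have h1 : (p : ℕ) < (b : ℕ) := hqb ▸ hq'
          have h2 : (p : ℕ) ≠ (a : ℕ) := fun h => hpa (Fin.ext h)
          exact Fin.lt_def.2 (by omega)
        · rw [Equiv.swap_apply_of_ne_of_ne hpa hpb, Equiv.swap_apply_of_ne_of_ne hqa hqb]
          exact hpq

lemma lenf_swap_ascent {w : Equiv.Perm (Fin n)} {a b : Fin n} (hab : (a : ℕ) + 1 = (b : ℕ))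
    (h : w a < w b) : lenf n (w * Equiv.swap a b) = lenf n w + 1 := by
  classical
  set σ := Equiv.swap a b with hσ
  have hσa : σ a = b := Equiv.swap_apply_left a b
  have hσb : σ b = a := Equiv.swap_apply_right a b
  have hltab : a < b := Fin.lt_def.2 (by omega)
  set L : Equiv.Perm (Fin n) → Finset (Fin n × Fin n) :=
    fun v => Finset.univ.filter (fun p : Fin n × Fin n => p.1 < p.2 ∧ v p.2 < v p.1) with hL
  have hWapp : ∀ p : Fin n, (w * σ) p = w (σ p) := fun p => rfl
  have habW : (a, b) ∈ L (w * σ) := by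
    simp only [hL, Finset.mem_filter, Finset.mem_univ, true_and]
    refine ⟨hltab, ?_⟩
    rw [hWapp, hWapp, hσa, hσb]; exact h
  have hset : L (w * σ) = insert (a, b) ((L w).image (fun p => (σ p.1, σ p.2))) := by
    ext ⟨p, q⟩
    simp only [hL, Finset.mem_insert, Finset.mem_image, Finset.mem_filter, Finset.mem_univ,
      true_and, Prod.mk.injEq, Prod.exists]
    constructor
    · rintro ⟨h1, h2⟩
      by_cases hpq : p = a ∧ q = b
      · exact Or.inl hpq
      · refine Or.inr ⟨σ p, σ q, ⟨swap_ord hab h1 hpq, ?_⟩, ?_, ?_⟩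
        · rw [hWapp, hWapp] at h2; exact h2
        · exact Equiv.swap_apply_self a b p
        · exact Equiv.swap_apply_self a b q
    · rintro (⟨rfl, rfl⟩ | ⟨r, s, ⟨h1, h2⟩, rfl, rfl⟩)
      · simp only [hL, Finset.mem_filter, Finset.mem_univ, true_and] at habW
        exact habW
      · have hrs : ¬(r = a ∧ s = b) := by
          rintro ⟨rfl, rfl⟩
          exact absurd h (not_lt.2 h2.le)
        refine ⟨swap_ord hab h1 hrs, ?_⟩
        rw [hWapp, hWapp, Equiv.swap_apply_self, Equiv.swap_apply_self]
        exact h2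
  have hnotmem : (a, b) ∉ (L w).image (fun p => (σ p.1, σ p.2)) := by
    simp only [Finset.mem_image, Prod.mk.injEq, Prod.exists]
    rintro ⟨r, s, hmem, h1, h2⟩
    have hr : r = b := by
      have := congrArg σ h1; rwa [Equiv.swap_apply_self, hσa] at this
    have hs : s = a := by
      have := congrArg σ h2; rwa [Equiv.swap_apply_self, hσb] at this
    subst hr; subst hs
    simp only [hL, Finset.mem_filter, Finset.mem_univ, true_and] at hmem
    exact absurd hmem.1 (not_lt.2 hltab.le)
  have hinj : Function.Injective (fun p : Fin n × Fin n => (σ p.1, σ p.2)) := by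
    intro p q hpq
    simp only [Prod.mk.injEq] at hpq
    ext
    · exact congrArg Fin.val (σ.injective hpq.1)
    · exact congrArg Fin.val (σ.injective hpq.2)
  show (L (w * σ)).card = (L w).card + 1
  rw [hset, Finset.card_insert_of_notMem hnotmem, Finset.card_image_of_injective _ hinj]

lemma lenf_le (w : Equiv.Perm (Fin n)) :
    lenf n w ≤ (Finset.univ.filter (fun p : Fin n × Fin n => p.1 < p.2)).card := by
  apply Finset.card_le_card
  intro p hp
  simp only [Finset.mem_filter, Finset.mem_univ, true_and] at hp ⊢
  exact hp.1

lemma card_pairs : (Finset.univ.filter (fun p : Fin n × Fin n => p.1 < p.2)).card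
    = ∑ i : Fin n, (n - 1 - (i : ℕ)) := by
  classical
  rw [Finset.card_eq_sum_card_fiberwise
    (f := fun p : Fin n × Fin n => p.1) (t := Finset.univ) (fun x _ => Finset.mem_univ _)]
  apply Finset.sum_congr rfl
  intro i _
  have : (Finset.univ.filter (fun p : Fin n × Fin n => p.1 < p.2)).filter
      (fun p => p.1 = i) = (Finset.Ioi i).image (fun q => (i, q)) := by
    ext ⟨p, q⟩
    simp only [Finset.mem_filter, Finset.mem_univ, true_and, Finset.mem_image,
      Finset.mem_Ioi, Prod.mk.injEq]
    constructor
    · rintro ⟨h1, rfl⟩; exact ⟨q, h1, rfl, rfl⟩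
    · rintro ⟨r, h1, rfl, rfl⟩; exact ⟨h1, rfl⟩
  rw [this, Finset.card_image_of_injective _
    (fun x y h => by simpa using congrArg Prod.snd h), Fin.card_Ioi]

lemma lenf_rev : lenf n Fin.revPerm = ∑ i : Fin n, (n - 1 - (i : ℕ)) := by
  rw [← card_pairs, lenf]
  congr 1
  apply Finset.filter_congr
  intro p _
  simp only [Fin.revPerm_apply, Fin.rev_lt_rev, and_iff_left_iff_imp]
  exact fun h => h

lemma strictAnti_eq_rev {w : Equiv.Perm (Fin n)} (h : ∀ p q : Fin n, p < q → w q < w p) :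
    w = Fin.revPerm := by
  have hsm : StrictMono (fun x => w (Fin.rev x)) := by
    intro p q hpq
    exact h _ _ (by rwa [Fin.rev_lt_rev])
  have hrange : Set.range (fun x => w (Fin.rev x)) = Set.range (id : Fin n → Fin n) := by
    rw [Set.range_id]
    apply Set.eq_univ_of_forall
    intro x
    exact ⟨Fin.rev (w.symm x), by simp⟩
  have := (hsm.range_inj strictMono_id).1 hrange
  apply Equiv.ext
  intro x
  have hx := congrFun this (Fin.rev x)
  simp only [Fin.rev_rev, id_eq] at hx
  simpa [Fin.revPerm_apply] using hx

lemma exists_ascent {w : Equiv.Perm (Fin n)} (hw : w ≠ Fin.revPerm) :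
    ∃ (i : ℕ) (h : i + 1 < n),
      w ⟨i, Nat.lt_of_succ_lt h⟩ < w ⟨i + 1, h⟩ := by
  by_contra hc
  push_neg at hc
  apply hw
  apply strictAnti_eq_rev
  have adj : ∀ (i : ℕ) (h : i + 1 < n), w ⟨i + 1, h⟩ < w ⟨i, Nat.lt_of_succ_lt h⟩ := by
    intro i h
    rcases lt_or_eq_of_le (hc i h) with h1 | h1
    · exact h1
    · exact absurd (w.injective h1) (by simp [Fin.ext_iff])
  have key : ∀ (d : ℕ) (p q : Fin n), (q : ℕ) = (p : ℕ) + d + 1 → w q < w p := by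
    intro d
    induction d with
    | zero =>
      intro p q hq
      have hlt : (p : ℕ) + 1 < n := by have := q.isLt; omega
      have hq' : q = ⟨(p : ℕ) + 1, hlt⟩ := Fin.ext (show (q : ℕ) = (p : ℕ) + 1 by omega)
      rw [hq']
      have h1 := adj (p : ℕ) hlt
      simpa [Fin.eta] using h1
    | succ d ih =>
      intro p q hq
      have hr : ((p : ℕ) + d + 1) < n := by have := q.isLt; omega
      have hr2 : ((p : ℕ) + d + 1) + 1 < n := by have := q.isLt; omega
      have h1 : w q < w ⟨(p : ℕ) + d + 1, hr⟩ := by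
        have hq' : q = ⟨((p : ℕ) + d + 1) + 1, hr2⟩ :=
          Fin.ext (show (q : ℕ) = ((p : ℕ) + d + 1) + 1 by omega)
        rw [hq']
        exact adj _ _
      exact h1.trans (ih p ⟨(p : ℕ) + d + 1, hr⟩ rfl)
  intro p q hpq
  have : (q : ℕ) = (p : ℕ) + ((q : ℕ) - (p : ℕ) - 1) + 1 := by
    have := Fin.lt_def.1 hpq; omega
  exact key _ p q this

/-! ### Degree utilities -/

lemma totalDegree_aeval_le (v : Fin n → MvPolynomial (Fin n) ℚ)
    (hv : ∀ i, (v i).totalDegree ≤ 1) (f : MvPolynomial (Fin n) ℚ) :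
    (aeval v f).totalDegree ≤ f.totalDegree := by
  conv_lhs => rw [f.as_sum]
  rw [map_sum]
  refine (totalDegree_finset_sum _ _).trans (Finset.sup_le ?_)
  intro d hd
  rw [aeval_monomial]
  refine (totalDegree_mul _ _).trans ?_
  have h1 : (algebraMap ℚ (MvPolynomial (Fin n) ℚ) (coeff d f)).totalDegree = 0 :=
    totalDegree_C _
  rw [h1, zero_add]
  rw [Finsupp.prod]
  refine (totalDegree_finset_prod _ _).trans ?_
  refine le_trans ?_ (le_totalDegree hd)
  rw [Finsupp.sum]
  apply Finset.sum_le_sum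
  intro i _
  exact (totalDegree_pow _ _).trans (by
    calc d i * (v i).totalDegree ≤ d i * 1 := Nat.mul_le_mul_left _ (hv i)
    _ = d i := mul_one _)

lemma totalDegree_mul_X' {p : MvPolynomial (Fin n) ℚ} (hp : p ≠ 0) (s : Fin n) :
    (p * X s).totalDegree = p.totalDegree + 1 := by
  classical
  have hs : p.support.Nonempty := support_nonempty.2 hp
  have hmap : (p * X s).support = p.support.map (addRightEmbedding (Finsupp.single s 1)) :=
    support_mul_X s p
  have e1 : (p * X s).totalDegree
      = (p.support.map (addRightEmbedding (Finsupp.single s 1))).sup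
        (fun m => m.sum fun _ e => e) := by
    rw [totalDegree, hmap]
  have hs3 : (p.support.map (addRightEmbedding (Finsupp.single s 1))).Nonempty := by
    rw [Finset.map_nonempty]; exact hs
  rw [e1, totalDegree, ← Finset.sup'_eq_sup hs3 _, ← Finset.sup'_eq_sup hs _, Finset.sup'_map]
  have step1 : (p.support).sup' hs
        (fun m => ((addRightEmbedding (Finsupp.single s 1)) m).sum (fun _ e => e))
      = (p.support).sup' hs (fun m => (m.sum fun _ e => e) + 1) := by
    apply Finset.sup'_congr hs rfl
    intro m _
    show ((m + Finsupp.single s 1).sum fun _ e => e) = _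
    rw [Finsupp.sum_add_index' (fun _ => rfl) (fun _ _ _ => rfl), Finsupp.sum_single_index rfl]
  have step2 : (p.support).sup' hs (fun m => (m.sum fun _ e => e) + 1)
      = (p.support).sup' hs (fun m => (m.sum fun _ e => e)) + 1 :=
    (Finset.comp_sup'_eq_sup'_comp hs (fun x : ℕ => x + 1)
      (fun x y => by simp [Nat.succ_max_succ])).symm
  calc _ = (p.support).sup' hs
        (fun m => ((addRightEmbedding (Finsupp.single s 1)) m).sum (fun _ e => e)) := rfl
    _ = _ := step1.trans step2

lemma sub_swap_dvd (i j : Fin n) (f : MvPolynomial (Fin n) ℚ) :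
    (X i - X j) ∣ (f - rename (Equiv.swap i j) f) := by
  induction f using MvPolynomial.induction_on with
  | C a => rw [rename_C, sub_self]; exact dvd_zero _
  | add p q hp hq =>
    have : p + q - rename (Equiv.swap i j) (p + q)
        = (p - rename (Equiv.swap i j) p) + (q - rename (Equiv.swap i j) q) := by
      rw [map_add]; ring
    rw [this]; exact dvd_add hp hq
  | mul_X p k hp =>
    have key : p * X k - rename (Equiv.swap i j) (p * X k)
        = (p - rename (Equiv.swap i j) p) * X k
          + rename (Equiv.swap i j) p * (X k - X (Equiv.swap i j k)) := by
      rw [map_mul, rename_X]; ring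
    rw [key]
    refine dvd_add (hp.mul_right _) (Dvd.dvd.mul_left ?_ _)
    rcases eq_or_ne k i with rfl | hki
    · rw [Equiv.swap_apply_left]
    · rcases eq_or_ne k j with rfl | hkj
      · rw [Equiv.swap_apply_right, ← dvd_neg]; ring_nf; exact dvd_refl _
      · rw [Equiv.swap_apply_of_ne_of_ne hki hkj, sub_self]
        exact dvd_zero _

lemma deg_one_sub_X (k : Fin n) : ((1 : MvPolynomial (Fin n) ℚ) - X k).totalDegree ≤ 1 := by
  rw [sub_eq_add_neg]
  refine (totalDegree_add _ _).trans ?_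
  simp [totalDegree_one, totalDegree_neg, totalDegree_X]

/-- the substitution `xᵢ ↦ 1 - xᵢ` -/
noncomputable def tau (n : ℕ) : MvPolynomial (Fin n) ℚ →ₐ[ℚ] MvPolynomial (Fin n) ℚ :=
  aeval (fun k => 1 - X k)

lemma tau_tau (f : MvPolynomial (Fin n) ℚ) : tau n (tau n f) = f := by
  have h : (tau n).comp (tau n) = AlgHom.id ℚ (MvPolynomial (Fin n) ℚ) := by
    apply MvPolynomial.algHom_ext
    intro k
    simp [tau, aeval_X]
  exact AlgHom.congr_fun h f

lemma tau_deg_le (f : MvPolynomial (Fin n) ℚ) : (tau n f).totalDegree ≤ f.totalDegree :=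
  totalDegree_aeval_le _ (fun i => deg_one_sub_X i) f

lemma rename_swap_deg (i j : Fin n) (f : MvPolynomial (Fin n) ℚ) :
    (rename (Equiv.swap i j) f).totalDegree = f.totalDegree := by
  apply le_antisymm (totalDegree_rename_le _ _)
  conv_lhs => rw [show f = rename (Equiv.swap i j) (rename (Equiv.swap i j) f) by
    rw [rename_rename]
    have h : (⇑(Equiv.swap i j) ∘ ⇑(Equiv.swap i j)) = id := by
      funext x; simp [Equiv.swap_apply_self]
    rw [h, rename_id, AlgHom.id_apply]]
  exact totalDegree_rename_le _ _

lemma totalDegree_X_sub_mul {i j : Fin n} (hij : i ≠ j) {q : MvPolynomial (Fin n) ℚ}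
    (hq : q ≠ 0) : ((X i - X j) * q).totalDegree = q.totalDegree + 1 := by
  classical
  set v : Fin n → MvPolynomial (Fin n) ℚ := fun k => if k = i then X i + X j else X k with hv
  set v' : Fin n → MvPolynomial (Fin n) ℚ := fun k => if k = i then X i - X j else X k with hv'
  have hcomp2 : (aeval v').comp (aeval v) = AlgHom.id ℚ (MvPolynomial (Fin n) ℚ) := by
    apply MvPolynomial.algHom_ext
    intro k
    simp only [AlgHom.coe_comp, Function.comp_apply, aeval_X, AlgHom.coe_id, id_eq]
    by_cases hk : k = i
    · subst hk
      simp [hv, hv', if_neg (Ne.symm hij)]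
    · simp [hv, hv', hk]
  have hvdeg : ∀ k, (v k).totalDegree ≤ 1 := by
    intro k
    by_cases hk : k = i
    · subst hk
      simp only [hv, if_pos rfl]
      refine (totalDegree_add _ _).trans ?_
      simp [totalDegree_X]
    · simp [hv, hk, totalDegree_X]
  have hv'deg : ∀ k, (v' k).totalDegree ≤ 1 := by
    intro k
    by_cases hk : k = i
    · subst hk
      simp only [hv', if_pos rfl]
      rw [sub_eq_add_neg]
      refine (totalDegree_add _ _).trans ?_
      simp [totalDegree_X, totalDegree_neg]
    · simp [hv', hk, totalDegree_X]
  have hdeg_eq : ∀ f : MvPolynomial (Fin n) ℚ, (aeval v f).totalDegree = f.totalDegree := by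
    intro f
    apply le_antisymm (totalDegree_aeval_le v hvdeg f)
    have h2 : f = aeval v' (aeval v f) := by
      have := AlgHom.congr_fun hcomp2 f
      simp only [AlgHom.coe_comp, Function.comp_apply, AlgHom.coe_id, id_eq] at this
      exact this.symm
    conv_lhs => rw [h2]
    exact totalDegree_aeval_le v' hv'deg _
  have hkey : aeval v ((X i - X j) * q) = aeval v q * X i := by
    rw [map_mul, map_sub, aeval_X, aeval_X]
    simp only [hv, if_pos rfl, if_neg (Ne.symm hij)]
    ring
  have hne : aeval v q ≠ 0 := by
    intro hc
    have : aeval v' (aeval v q) = 0 := by rw [hc, map_zero]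
    have h2 : ((aeval v').comp (aeval v)) q = 0 := this
    rw [hcomp2] at h2
    exact hq h2
  rw [← hdeg_eq ((X i - X j) * q), hkey, totalDegree_mul_X' hne, hdeg_eq]

/-! ### Polynomiality of `pitf` -/

lemma pitf_of_identity (i j : Fin n) (hij : i ≠ j) (g' q : MvPolynomial (Fin n) ℚ)
    (hid : (1 - X j) * g' - rename (Equiv.swap i j) ((1 - X j) * g') = (X i - X j) * q) :
    φ n q = pitf n i j (φ n g') := by
  have hF : (1 - Xf n j) * φ n g' = φ n ((1 - X j) * g') := by
    rw [map_mul, map_sub, map_one]; rfl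
  rw [pitf, Af, hF, swapf_algebraMap, ← map_sub, hid, map_mul]
  have h2 : φ n (X i - X j) = Xf n i - Xf n j := by rw [map_sub]; rfl
  rw [h2, mul_div_cancel_left₀ _ (Xf_sub_ne i j hij)]

lemma pitf_poly (i j : Fin n) (hij : i ≠ j) (g' : MvPolynomial (Fin n) ℚ) :
    ∃ q : MvPolynomial (Fin n) ℚ,
      φ n q = pitf n i j (φ n g') ∧ q.totalDegree ≤ g'.totalDegree := by
  obtain ⟨q, hq⟩ := sub_swap_dvd i j ((1 - X j) * g')
  refine ⟨q, pitf_of_identity i j hij g' q hq, ?_⟩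
  rcases eq_or_ne q 0 with rfl | hq0
  · simp
  · have hdeg : ((1 - X j) * g'
        - rename (Equiv.swap i j) ((1 - X j) * g')).totalDegree ≤ 1 + g'.totalDegree := by
      refine (totalDegree_sub _ _).trans ?_
      rw [rename_swap_deg, max_self]
      exact (totalDegree_mul _ _).trans (Nat.add_le_add_right (deg_one_sub_X j) _)
    rw [hq, totalDegree_X_sub_mul hij hq0] at hdeg
    omega

/-! ### The staircase monomial -/

noncomputable def xdelta (n : ℕ) : MvPolynomial (Fin n) ℚ :=
  ∏ k : Fin n, X k ^ (n - 1 - (k : ℕ))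

noncomputable def pdelta (n : ℕ) : MvPolynomial (Fin n) ℚ :=
  ∏ k : Fin n, (1 - X k) ^ (n - 1 - (k : ℕ))

noncomputable def delta (n : ℕ) : Fin n →₀ ℕ :=
  ∑ k : Fin n, Finsupp.single k (n - 1 - (k : ℕ))

lemma delta_apply (i : Fin n) : delta n i = n - 1 - (i : ℕ) := by
  rw [delta, Finset.sum_apply']
  rw [Finset.sum_eq_single i]
  · simp
  · intro b _ hb
    exact Finsupp.single_eq_of_ne' hb
  · intro h
    exact absurd (Finset.mem_univ i) h

lemma delta_degree : (delta n).sum (fun _ e => e) = ∑ k : Fin n, (n - 1 - (k : ℕ)) := by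
  rw [Finsupp.sum_fintype _ _ (fun _ => rfl)]
  exact Finset.sum_congr rfl (fun i _ => delta_apply i)

lemma prod_monomial_one (t : Finset (Fin n)) (f : Fin n → (Fin n →₀ ℕ)) :
    ∏ k ∈ t, monomial (f k) (1 : ℚ) = monomial (∑ k ∈ t, f k) 1 := by
  classical
  induction t using Finset.induction_on with
  | empty => simp [monomial_zero']
  | @insert _ _ hnot ih =>
    rw [Finset.prod_insert hnot, Finset.sum_insert hnot, ih, monomial_mul, one_mul]

lemma xdelta_eq_monomial : xdelta n = monomial (delta n) (1 : ℚ) := by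
  rw [xdelta, delta]
  rw [Finset.prod_congr rfl (fun k _ => X_pow_eq_monomial)]
  exact prod_monomial_one _ _

lemma xdelta_deg : (xdelta n).totalDegree ≤ ∑ k : Fin n, (n - 1 - (k : ℕ)) := by
  rw [xdelta_eq_monomial]
  refine (totalDegree_monomial_le _ _).trans ?_
  exact le_of_eq delta_degree

lemma coeff_delta_xdelta : coeff (delta n) (xdelta n) = 1 := by
  rw [xdelta_eq_monomial, coeff_monomial, if_pos rfl]

lemma phi_xdelta : φ n (xdelta n) = ∏ i : Fin n, Xf n i ^ (n - 1 - (i : ℕ)) := by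
  rw [xdelta, map_prod]
  apply Finset.prod_congr rfl
  intro k _
  rw [map_pow]
  rfl

/-! ### One explicit Demazure step below the top -/

lemma step_top (i j : Fin n) (hij1 : (i : ℕ) + 1 = (j : ℕ)) :
    ∃ g0 : MvPolynomial (Fin n) ℚ,
      ((1 - X j) * xdelta n) - rename (Equiv.swap i j) ((1 - X j) * xdelta n)
        = (X i - X j) * g0
      ∧ g0.totalDegree + 1 ≤ ∑ k : Fin n, (n - 1 - (k : ℕ)) := by
  classical
  have hij : i ≠ j := fun h => by rw [h] at hij1; omega
  have hji : j ≠ i := hij.symm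
  set σ := Equiv.swap i j with hσ
  set a : ℕ := n - 2 - (i : ℕ) with ha
  have hjn : (j : ℕ) < n := j.isLt
  have hmi : n - 1 - (i : ℕ) = a + 1 := by omega
  have hmj : n - 1 - (j : ℕ) = a := by omega
  set M : MvPolynomial (Fin n) ℚ :=
    ∏ k ∈ (Finset.univ.erase i).erase j, X k ^ (n - 1 - (k : ℕ)) with hM
  have hjmem : j ∈ Finset.univ.erase i := Finset.mem_erase.2 ⟨hji, Finset.mem_univ j⟩
  have hsplit : ∀ F : Fin n → MvPolynomial (Fin n) ℚ,
      ∏ k : Fin n, F k = F i * (F j * ∏ k ∈ (Finset.univ.erase i).erase j, F k) := by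
    intro F
    rw [← Finset.mul_prod_erase Finset.univ F (Finset.mem_univ i),
      ← Finset.mul_prod_erase (Finset.univ.erase i) F hjmem]
  have hxdelta : xdelta n = X i ^ (a + 1) * (X j ^ a * M) := by
    rw [xdelta, hsplit (fun k => X k ^ (n - 1 - (k : ℕ))), hmi, hmj]
  have hMswap : rename σ M = M := by
    rw [hM, map_prod]
    apply Finset.prod_congr rfl
    intro k hk
    rw [Finset.mem_erase, Finset.mem_erase] at hk
    rw [map_pow, rename_X, hσ, Equiv.swap_apply_of_ne_of_ne hk.2.1 hk.1]
  have hren : ∀ (b c : ℕ), rename σ (X i ^ b * (X j ^ c * M)) = X j ^ b * (X i ^ c * M) := by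
    intro b c
    rw [map_mul, map_mul, map_pow, map_pow, rename_X, rename_X, hσ,
      Equiv.swap_apply_left, Equiv.swap_apply_right, hMswap]
  refine ⟨X i ^ a * (X j ^ a * M), ?_, ?_⟩
  · have h1 : (1 - X j) * xdelta n = xdelta n - X i ^ (a+1) * (X j ^ (a+1) * M) := by
      rw [hxdelta]; ring
    rw [h1, map_sub, hren, hxdelta, hren]
    ring
  · have hdegM : M.totalDegree ≤ ∑ k ∈ (Finset.univ.erase i).erase j, (n - 1 - (k : ℕ)) := by
      refine (totalDegree_finset_prod _ _).trans ?_
      apply Finset.sum_le_sum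
      intro k _
      exact (totalDegree_pow _ _).trans (by simp [totalDegree_X])
    have hdeg : (X i ^ a * (X j ^ a * M)).totalDegree
        ≤ a + (a + M.totalDegree) := by
      refine (totalDegree_mul _ _).trans ?_
      have h2 : (X j ^ a * M).totalDegree ≤ a + M.totalDegree := by
        refine (totalDegree_mul _ _).trans ?_
        exact Nat.add_le_add_right ((totalDegree_pow _ _).trans (by simp [totalDegree_X])) _
      have h3 : ((X i : MvPolynomial (Fin n) ℚ) ^ a).totalDegree ≤ a :=
        (totalDegree_pow _ _).trans (by simp [totalDegree_X])
      omega
    have hsum : ∑ k : Fin n, (n - 1 - (k : ℕ))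
        = (a + 1) + (a + ∑ k ∈ (Finset.univ.erase i).erase j, (n - 1 - (k : ℕ))) := by
      rw [← Finset.add_sum_erase Finset.univ (fun k : Fin n => (n - 1 - (k : ℕ)))
        (Finset.mem_univ i),
        ← Finset.add_sum_erase (Finset.univ.erase i) (fun k : Fin n => (n - 1 - (k : ℕ))) hjmem,
        hmi, hmj]
    omega

/-! ### coefficient of the staircase in `pdelta` -/

lemma coeff_delta_pdelta :
    coeff (delta n) (pdelta n)
      = (-1 : ℚ) ^ (∑ k : Fin n, (n - 1 - (k : ℕ))) := by
  classical
  set m : Fin n → ℕ := fun k => n - 1 - (k : ℕ) with hm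
  set D : ℕ := ∑ k : Fin n, m k with hD
  set r : Fin n → MvPolynomial (Fin n) ℚ :=
    fun k => (1 - X k) ^ (m k) - (- X k) ^ (m k) with hr
  have hrzero : ∀ k, m k = 0 → r k = 0 := by
    intro k hk
    simp [hr, hk]
  have hrdeg : ∀ k, 1 ≤ m k → (r k).totalDegree + 1 ≤ m k := by
    intro k hk
    have hbinom : ((1 : MvPolynomial (Fin n) ℚ) - X k) ^ (m k)
        = ∑ e ∈ Finset.range (m k + 1),
          (- X k) ^ e * 1 ^ (m k - e) * ((m k).choose e : MvPolynomial (Fin n) ℚ) := by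
      rw [show (1 : MvPolynomial (Fin n) ℚ) - X k = - X k + 1 by ring]
      exact add_pow _ _ _
    have hrsum : r k = ∑ e ∈ Finset.range (m k),
        (- X k) ^ e * 1 ^ (m k - e) * ((m k).choose e : MvPolynomial (Fin n) ℚ) := by
      rw [hr]
      simp only
      rw [hbinom, Finset.sum_range_succ]
      simp
    rw [hrsum]
    have : (∑ e ∈ Finset.range (m k), (- X k) ^ e * 1 ^ (m k - e)
        * ((m k).choose e : MvPolynomial (Fin n) ℚ)).totalDegree ≤ m k - 1 := by
      refine (totalDegree_finset_sum _ _).trans (Finset.sup_le ?_)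
      intro e he
      rw [Finset.mem_range] at he
      refine (totalDegree_mul _ _).trans ?_
      have h1 : ((- X k : MvPolynomial (Fin n) ℚ) ^ e * 1 ^ (m k - e)).totalDegree ≤ e := by
        refine (totalDegree_mul _ _).trans ?_
        simp only [one_pow, totalDegree_one]
        refine Nat.add_le_add ?_ (le_refl 0)
        refine (totalDegree_pow _ _).trans ?_
        rw [totalDegree_neg, totalDegree_X]
        omega
      have h2 : ((m k).choose e : MvPolynomial (Fin n) ℚ).totalDegree = 0 := by
        rw [show ((m k).choose e : MvPolynomial (Fin n) ℚ) = C ((m k).choose e : ℚ) by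
          simp]
        exact totalDegree_C _
      omega
    omega
  have hsplit : pdelta n = ∏ k : Fin n, ((- X k) ^ (m k) + r k) := by
    rw [pdelta]
    apply Finset.prod_congr rfl
    intro k _
    rw [hr]
    ring
  rw [hsplit, Finset.prod_add]
  rw [coeff_sum]
  rw [Finset.sum_eq_single Finset.univ]
  · rw [Finset.sdiff_self, Finset.prod_empty, mul_one]
    have hmain : ∏ k : Fin n, (- X k : MvPolynomial (Fin n) ℚ) ^ (m k)
        = C ((-1 : ℚ) ^ D) * xdelta n := by
      rw [xdelta]
      have hterm : ∀ k ∈ Finset.univ,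
          (- X k : MvPolynomial (Fin n) ℚ) ^ (m k) = (-1) ^ (m k) * X k ^ (m k) := by
        intro k _
        rw [neg_pow]
      rw [Finset.prod_congr rfl hterm]
      rw [Finset.prod_mul_distrib]
      congr 1
      rw [Finset.prod_pow_eq_pow_sum]
      rw [← hD]
      rw [show ((-1 : MvPolynomial (Fin n) ℚ)) = C (-1 : ℚ) by simp]
      rw [← C_pow]
    rw [hmain, coeff_C_mul, coeff_delta_xdelta, mul_one]
  · intro t _ ht
    by_cases hz : ∃ k ∈ Finset.univ \ t, m k = 0
    · obtain ⟨k, hk, hmk⟩ := hz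
      rw [Finset.prod_eq_zero hk (hrzero k hmk), mul_zero, coeff_zero]
    · push_neg at hz
      apply coeff_eq_zero_of_totalDegree_lt
      have hne : (Finset.univ \ t).Nonempty := by
        rw [Finset.sdiff_nonempty]
        intro hsub
        exact ht (Finset.univ_subset_iff.1 hsub)
      have hdeg1 : (∏ k ∈ t, (- X k : MvPolynomial (Fin n) ℚ) ^ (m k)).totalDegree
          ≤ ∑ k ∈ t, m k := by
        refine (totalDegree_finset_prod _ _).trans ?_
        apply Finset.sum_le_sum
        intro k _
        refine (totalDegree_pow _ _).trans ?_
        rw [totalDegree_neg, totalDegree_X]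
        omega
      have hdeg2 : (∏ k ∈ Finset.univ \ t, r k).totalDegree
          ≤ ∑ k ∈ Finset.univ \ t, ((r k).totalDegree) := totalDegree_finset_prod _ _
      have hdeg3 : ∑ k ∈ Finset.univ \ t, ((r k).totalDegree) + (Finset.univ \ t).card
          ≤ ∑ k ∈ Finset.univ \ t, m k := by
        rw [Finset.card_eq_sum_ones, ← Finset.sum_add_distrib]
        apply Finset.sum_le_sum
        intro k hk
        have := hrdeg k (Nat.one_le_iff_ne_zero.2 (hz k hk))
        omega
      have hcard : 1 ≤ (Finset.univ \ t).card := Finset.card_pos.2 hne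
      have hsum : ∑ k ∈ t, m k + ∑ k ∈ Finset.univ \ t, m k = D := by
        rw [hD, add_comm, Finset.sum_sdiff (Finset.subset_univ t)]
      have hdegsum : (delta n).sum (fun _ e => e) = D := delta_degree
      have := totalDegree_mul (∏ k ∈ t, (- X k : MvPolynomial (Fin n) ℚ) ^ (m k))
        (∏ k ∈ Finset.univ \ t, r k)
      have hdd : ∑ i ∈ (delta n).support, (delta n) i = D := hdegsum
      rw [hdd]
      omega
  · intro h
    exact absurd (Finset.mem_powerset.2 (Finset.Subset.refl _)) h

/-! ### Primality and divisibility -/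

lemma prime_one_sub_X (i : Fin n) : Prime ((1 : MvPolynomial (Fin n) ℚ) - X i) := by
  classical
  set E := (renameEquiv ℚ ((Equiv.optionSubtypeNe i).symm)).trans
    (optionEquivLeft ℚ {b : Fin n // b ≠ i}) with hE
  have hEX : E ((1 : MvPolynomial (Fin n) ℚ) - X i)
      = 1 - Polynomial.X := by
    rw [map_sub, map_one]
    congr 1
    rw [hE, AlgEquiv.trans_apply, renameEquiv_apply, rename_X,
      Equiv.optionSubtypeNe_symm_self, optionEquivLeft_X_none]
  have hp : Prime ((1 : Polynomial (MvPolynomial {b : Fin n // b ≠ i} ℚ)) - Polynomial.X) := by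
    have h1 : ((1 : Polynomial (MvPolynomial {b : Fin n // b ≠ i} ℚ)) - Polynomial.X)
        = -(Polynomial.X - Polynomial.C 1) := by
      rw [map_one]; ring
    rw [h1]
    exact (Polynomial.prime_X_sub_C 1).neg
  have := (MulEquiv.prime_iff E.toRingEquiv.toMulEquiv (p := (1 : MvPolynomial (Fin n) ℚ) - X i)).1 (by
    show Prime (E.toRingEquiv.toMulEquiv ((1 : MvPolynomial (Fin n) ℚ) - X i))
    rw [show E.toRingEquiv.toMulEquiv ((1 : MvPolynomial (Fin n) ℚ) - X i)
      = E ((1 : MvPolynomial (Fin n) ℚ) - X i) from rfl, hEX]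
    exact hp)
  exact this

lemma not_dvd_one_sub_X {i k : Fin n} (h : k ≠ i) :
    ¬ ((1 : MvPolynomial (Fin n) ℚ) - X i) ∣ (1 - X k) := by
  intro hd
  have := map_dvd (eval (fun t : Fin n => if t = i then (1 : ℚ) else 0)) hd
  simp only [map_sub, map_one, eval_X] at this
  rw [if_true, if_neg h, sub_self, sub_zero, zero_dvd_iff] at this
  norm_num at this

lemma not_dvd_prod {i₀ : Fin n} {t : Finset (Fin n)} (hnot : i₀ ∉ t) (m : Fin n → ℕ) :
    ¬ ((1 : MvPolynomial (Fin n) ℚ) - X i₀) ∣ ∏ k ∈ t, (1 - X k) ^ (m k) := by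
  intro hd
  have := map_dvd (eval (fun s : Fin n => if s = i₀ then (1 : ℚ) else 0)) hd
  rw [map_sub, map_one, eval_X] at this
  rw [if_pos rfl, sub_self, zero_dvd_iff, map_prod] at this
  have hone : ∀ k ∈ t, eval (fun s : Fin n => if s = i₀ then (1 : ℚ) else 0)
      ((1 - X k) ^ (m k)) = 1 := by
    intro k hk
    have hki : k ≠ i₀ := fun hc => hnot (hc ▸ hk)
    rw [map_pow, map_sub, map_one, eval_X]
    rw [if_neg hki, sub_zero, one_pow]
  rw [Finset.prod_congr rfl hone, Finset.prod_const_one] at this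
  norm_num at this

lemma dvd_chain (s : MvPolynomial (Fin n) ℚ)
    (hrel : ∀ (i : ℕ) (h : i + 1 < n),
      (1 - X (⟨i + 1, h⟩ : Fin n)) * s
        = (1 - X (⟨i, Nat.lt_of_succ_lt h⟩ : Fin n))
          * rename (Equiv.swap (⟨i, Nat.lt_of_succ_lt h⟩ : Fin n) ⟨i + 1, h⟩) s) :
    ∀ (d : ℕ) (i : Fin n), (i : ℕ) + 1 + d ≤ n
      → ((1 : MvPolynomial (Fin n) ℚ) - X i) ^ d ∣ s := by
  intro d
  induction d with
  | zero => intro i _; rw [pow_zero]; exact one_dvd _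
  | succ d ih =>
    intro i hi
    have hlt : (i : ℕ) + 1 < n := by omega
    set j : Fin n := ⟨(i : ℕ) + 1, hlt⟩ with hj
    have hIH : ((1 : MvPolynomial (Fin n) ℚ) - X j) ^ d ∣ s := ih j (by simp [hj]; omega)
    have h1 : ((1 : MvPolynomial (Fin n) ℚ) - X j) ^ (d + 1) ∣ (1 - X j) * s := by
      rw [pow_succ']
      exact mul_dvd_mul_left _ hIH
    have hieq : (⟨(i : ℕ), Nat.lt_of_succ_lt hlt⟩ : Fin n) = i := Fin.eta i _
    have hrel' := hrel (i : ℕ) hlt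
    rw [hieq] at hrel'
    rw [hrel'] at h1
    have hji : i ≠ j := fun hc => by
      have := congrArg Fin.val hc; simp [hj] at this
    have h2 := (prime_one_sub_X j).pow_dvd_of_dvd_mul_left _ (not_dvd_one_sub_X hji) h1
    have h3 := map_dvd (rename (Equiv.swap i j)) h2
    rw [map_pow, map_sub, map_one, rename_X, Equiv.swap_apply_right, rename_rename] at h3
    have hid : (⇑(Equiv.swap i j) ∘ ⇑(Equiv.swap i j)) = id := by
      funext x; simp [Equiv.swap_apply_self]
    rw [hid, rename_id] at h3
    exact h3

lemma pdelta_dvd (s : MvPolynomial (Fin n) ℚ)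
    (hrel : ∀ (i : ℕ) (h : i + 1 < n),
      (1 - X (⟨i + 1, h⟩ : Fin n)) * s
        = (1 - X (⟨i, Nat.lt_of_succ_lt h⟩ : Fin n))
          * rename (Equiv.swap (⟨i, Nat.lt_of_succ_lt h⟩ : Fin n) ⟨i + 1, h⟩) s) :
    pdelta n ∣ s := by
  classical
  suffices h : ∀ t : Finset (Fin n),
      (∏ k ∈ t, ((1 : MvPolynomial (Fin n) ℚ) - X k) ^ (n - 1 - (k : ℕ))) ∣ s by
    exact h Finset.univ
  intro t
  induction t using Finset.induction_on with
  | empty => simp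
  | @insert i₀ t hnot ih =>
    obtain ⟨v, hv⟩ := ih
    have h2 : ((1 : MvPolynomial (Fin n) ℚ) - X i₀) ^ (n - 1 - (i₀ : ℕ)) ∣ s :=
      dvd_chain s hrel _ i₀ (by have := i₀.isLt; omega)
    rw [hv] at h2
    have h4 := (prime_one_sub_X i₀).pow_dvd_of_dvd_mul_left _ (not_dvd_prod hnot _) h2
    rw [Finset.prod_insert hnot, hv]
    obtain ⟨w, hw⟩ := h4
    exact ⟨w, by rw [hw]; ring⟩

lemma tau_pdelta : tau n (pdelta n) = xdelta n := by
  rw [pdelta, xdelta, map_prod]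
  apply Finset.prod_congr rfl
  intro k _
  rw [map_pow, map_sub, map_one, tau, aeval_X]
  congr 1
  ring

lemma s_eq_pdelta {s : MvPolynomial (Fin n) ℚ}
    (hdvd : pdelta n ∣ s)
    (hdeg : s.totalDegree ≤ ∑ k : Fin n, (n - 1 - (k : ℕ)))
    (hcoeff : coeff (delta n) s = (-1 : ℚ) ^ (∑ k : Fin n, (n - 1 - (k : ℕ)))) :
    s = pdelta n := by
  classical
  set D := ∑ k : Fin n, (n - 1 - (k : ℕ)) with hD
  obtain ⟨u, rfl⟩ := hdvd
  have hT : tau n (pdelta n * u) = xdelta n * tau n u := by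
    rw [map_mul, tau_pdelta]
  set c := coeff 0 (tau n u) with hc
  have huC : tau n u = C c := by
    apply MvPolynomial.ext
    intro d
    rcases eq_or_ne d 0 with rfl | hd
    · rw [coeff_zero_C]
    · rw [coeff_C, if_neg (Ne.symm hd)]
      by_contra hne
      have hkey : coeff (delta n + d) (monomial (delta n) (1:ℚ) * tau n u)
          = coeff d (tau n u) := by
        rw [coeff_monomial_mul, one_mul]
      rw [← xdelta_eq_monomial, ← hT] at hkey
      have hsupp : (delta n + d) ∈ (tau n (pdelta n * u)).support := by
        rw [mem_support_iff, hkey]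
        exact hne
      have hle := le_totalDegree hsupp
      have hle2 : (tau n (pdelta n * u)).totalDegree ≤ D := (tau_deg_le _).trans hdeg
      have hsum : (delta n + d).sum (fun _ e => e)
          = (delta n).sum (fun _ e => e) + d.sum (fun _ e => e) :=
        Finsupp.sum_add_index' (fun _ => rfl) (fun _ _ _ => rfl)
      have hdpos : 1 ≤ d.sum (fun _ e => e) := by
        by_contra hz
        push_neg at hz
        have hz0 : d.sum (fun _ e => e) = 0 := by omega
        apply hd
        ext k
        simp only [Finsupp.coe_zero, Pi.zero_apply]
        by_contra hk
        have hmem : k ∈ d.support := Finsupp.mem_support_iff.2 hk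
        have hle3 : d k ≤ d.sum (fun _ e => e) := by
          rw [Finsupp.sum]
          exact Finset.single_le_sum (fun _ _ => Nat.zero_le _) hmem
        omega
      have hdd : (delta n).sum (fun _ e => e) = D := delta_degree
      omega
  have hu : u = C c := by
    rw [← tau_tau (f := u), huC]
    rw [tau, aeval_C]
    rfl
  rw [hu] at hcoeff ⊢
  have hcc : coeff (delta n) (pdelta n * C c) = c * (-1 : ℚ) ^ D := by
    rw [mul_comm, coeff_C_mul, coeff_delta_pdelta, hD]
  rw [hcc] at hcoeff
  have hc1 : c = 1 := by
    have hne : ((-1 : ℚ) ^ D) ≠ 0 := pow_ne_zero _ (by norm_num)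
    have h1 : c * (-1 : ℚ) ^ D = 1 * (-1 : ℚ) ^ D := by rw [hcoeff, one_mul]
    exact mul_right_cancel₀ hne h1
  rw [hc1, C_1, mul_one]

/-! ### The functional equation for the signed sum -/

lemma funct_eq (G : Equiv.Perm (Fin n) → Kf n)
    (hrec : ∀ (w : Equiv.Perm (Fin n)) (i : ℕ) (h : i + 1 < n),
      lenf n w < lenf n (w * Equiv.swap ⟨i, Nat.lt_of_succ_lt h⟩ ⟨i + 1, h⟩) →
      G w = pitf n ⟨i, Nat.lt_of_succ_lt h⟩ ⟨i + 1, h⟩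
        (G (w * Equiv.swap ⟨i, Nat.lt_of_succ_lt h⟩ ⟨i + 1, h⟩)))
    (i : ℕ) (h : i + 1 < n) :
    (1 - Xf n ⟨i + 1, h⟩) * (∑ w : Equiv.Perm (Fin n), (-1 : Kf n) ^ lenf n w * G w)
      = (1 - Xf n ⟨i, Nat.lt_of_succ_lt h⟩)
        * swapf n ⟨i, Nat.lt_of_succ_lt h⟩ ⟨i + 1, h⟩
          (∑ w : Equiv.Perm (Fin n), (-1 : Kf n) ^ lenf n w * G w) := by
  classical
  set a : Fin n := ⟨i, Nat.lt_of_succ_lt h⟩ with hadef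
  set b : Fin n := ⟨i + 1, h⟩ with hbdef
  have hab : (a : ℕ) + 1 = (b : ℕ) := rfl
  have habne : a ≠ b := Fin.ne_of_val_ne (show i ≠ i + 1 by omega)
  set σ := Equiv.swap a b with hσ
  rw [← sub_eq_zero, map_sum, Finset.mul_sum, Finset.mul_sum, ← Finset.sum_sub_distrib]
  have hsc : ∀ l : ℕ, swapf n a b ((-1 : Kf n) ^ l) = (-1 : Kf n) ^ l := by
    intro l
    rw [map_pow, map_neg, map_one]
  have hwss : ∀ w : Equiv.Perm (Fin n), (w * σ) * σ = w := by
    intro w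
    rw [mul_assoc, hσ, Equiv.swap_mul_self, mul_one]
  have pair_zero : ∀ w : Equiv.Perm (Fin n), w a < w b →
      ((1 - Xf n b) * ((-1 : Kf n) ^ lenf n w * G w)
        - (1 - Xf n a) * swapf n a b ((-1 : Kf n) ^ lenf n w * G w))
      + ((1 - Xf n b) * ((-1 : Kf n) ^ lenf n (w * σ) * G (w * σ))
        - (1 - Xf n a) * swapf n a b ((-1 : Kf n) ^ lenf n (w * σ) * G (w * σ))) = 0 := by
    intro w hasc
    have hlen : lenf n (w * σ) = lenf n w + 1 := lenf_swap_ascent hab hasc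
    have hGw : G w = pitf n a b (G (w * σ)) := hrec w i h (by rw [hlen]; omega)
    have key := pair_key a b habne (G (w * σ))
    rw [map_sub] at key
    rw [hlen, hGw, pow_succ]
    simp only [map_mul, hsc, map_neg, map_one]
    linear_combination ((-1 : Kf n) ^ lenf n w) * key
  apply Finset.sum_ninvolution (g := fun w => w * σ)
  · intro w
    have hne : w a ≠ w b := w.injective.ne habne
    rcases hne.lt_or_gt with hlt | hgt
    · exact pair_zero w hlt
    · have h2 := pair_zero (w * σ) (by
        have h1 : (w * σ) a = w b := by
          rw [Equiv.Perm.mul_apply, hσ, Equiv.swap_apply_left]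
        have h2 : (w * σ) b = w a := by
          rw [Equiv.Perm.mul_apply, hσ, Equiv.swap_apply_right]
        rw [h1, h2]
        exact hgt)
      rw [hwss] at h2
      rw [add_comm]
      exact h2
  · intro w _
    intro hc
    have hσ1 : σ = 1 := by
      have := congrArg (fun v => w⁻¹ * v) hc
      simpa [mul_assoc] using this
    have := congrArg (fun v : Equiv.Perm (Fin n) => v a) hσ1
    simp only [hσ, Equiv.swap_apply_left, Equiv.Perm.one_apply] at this
    exact habne this.symm
  · intro w
    exact Finset.mem_univ _
  · intro w
    exact hwss w

/-! ### Polynomiality of the Grothendieck family -/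

lemma hpoly_aux (G : Equiv.Perm (Fin n) → Kf n)
    (htop : G Fin.revPerm = ∏ i : Fin n, Xf n i ^ (n - 1 - i.val))
    (hrec : ∀ (w : Equiv.Perm (Fin n)) (i : ℕ) (h : i + 1 < n),
      lenf n w < lenf n (w * Equiv.swap ⟨i, Nat.lt_of_succ_lt h⟩ ⟨i + 1, h⟩) →
      G w = pitf n ⟨i, Nat.lt_of_succ_lt h⟩ ⟨i + 1, h⟩
        (G (w * Equiv.swap ⟨i, Nat.lt_of_succ_lt h⟩ ⟨i + 1, h⟩))) :
    ∀ (k : ℕ) (w : Equiv.Perm (Fin n)),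
      (∑ t : Fin n, (n - 1 - (t : ℕ))) ≤ lenf n w + k →
      ∃ g : MvPolynomial (Fin n) ℚ, φ n g = G w
        ∧ g.totalDegree ≤ ∑ t : Fin n, (n - 1 - (t : ℕ))
        ∧ (w ≠ Fin.revPerm → g.totalDegree < ∑ t : Fin n, (n - 1 - (t : ℕ))) := by
  have hbase : ∀ w : Equiv.Perm (Fin n), w = Fin.revPerm →
      ∃ g : MvPolynomial (Fin n) ℚ, φ n g = G w
        ∧ g.totalDegree ≤ ∑ t : Fin n, (n - 1 - (t : ℕ))
        ∧ (w ≠ Fin.revPerm → g.totalDegree < ∑ t : Fin n, (n - 1 - (t : ℕ))) := by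
    intro w hw
    subst hw
    exact ⟨xdelta n, phi_xdelta.trans htop.symm, xdelta_deg, fun hc => absurd rfl hc⟩
  intro k
  induction k with
  | zero =>
    intro w hw
    apply hbase
    by_contra hne
    obtain ⟨i, h, hasc⟩ := exists_ascent hne
    set a : Fin n := ⟨i, Nat.lt_of_succ_lt h⟩
    set b : Fin n := ⟨i + 1, h⟩
    have hlen : lenf n (w * Equiv.swap a b) = lenf n w + 1 := lenf_swap_ascent rfl hasc
    have hle := (lenf_le (w * Equiv.swap a b)).trans_eq card_pairs
    omega
  | succ k ih =>
    intro w hw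
    by_cases hrev : w = Fin.revPerm
    · exact hbase w hrev
    · obtain ⟨i, h, hasc⟩ := exists_ascent hrev
      set a : Fin n := ⟨i, Nat.lt_of_succ_lt h⟩ with hadef
      set b : Fin n := ⟨i + 1, h⟩ with hbdef
      have habne : a ≠ b := Fin.ne_of_val_ne (show i ≠ i + 1 by omega)
      have hlen : lenf n (w * Equiv.swap a b) = lenf n w + 1 := lenf_swap_ascent rfl hasc
      have hGw : G w = pitf n a b (G (w * Equiv.swap a b)) :=
        hrec w i h (by rw [hlen]; omega)
      obtain ⟨g', hg'1, hg'2, hg'3⟩ := ih (w * Equiv.swap a b) (by omega)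
      by_cases hrev2 : w * Equiv.swap a b = Fin.revPerm
      · have hgx : g' = xdelta n := by
          apply φ_inj
          rw [hg'1, hrev2, htop, phi_xdelta]
        obtain ⟨g0, hg0id, hg0deg⟩ := step_top a b rfl
        have hq := pitf_of_identity a b habne (xdelta n) g0 hg0id
        refine ⟨g0, ?_, by omega, fun _ => by omega⟩
        rw [hq, ← hgx, hg'1, ← hGw]
      · obtain ⟨q, hq1, hq2⟩ := pitf_poly a b habne g'
        refine ⟨q, ?_, hq2.trans hg'2, fun _ => lt_of_le_of_lt hq2 (hg'3 hrev2)⟩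
        rw [hq1, hg'1, ← hGw]

end SSG

/-- The signed sum of the Grothendieck polynomials over `Sₙ` equals
`∏_{i=1}^{n-1} (1 - xᵢ)^{n-i}`.  Here the Grothendieck polynomials are any family
`𝔊_w` with `𝔊_{w₀} = x₁^{n-1}⋯x_{n-1}` and `𝔊_w = π̃ᵢ 𝔊_{w sᵢ}` when `ℓ(w sᵢ) > ℓ(w)`. -/
theorem signed_sum_grothendieck (n : ℕ) (G : Equiv.Perm (Fin n) → Kf n)
    (htop : G Fin.revPerm = ∏ i : Fin n, Xf n i ^ (n - 1 - i.val))
    (hrec : ∀ (w : Equiv.Perm (Fin n)) (i : ℕ) (h : i + 1 < n),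
      lenf n w < lenf n (w * Equiv.swap ⟨i, Nat.lt_of_succ_lt h⟩ ⟨i + 1, h⟩) →
      G w = pitf n ⟨i, Nat.lt_of_succ_lt h⟩ ⟨i + 1, h⟩
        (G (w * Equiv.swap ⟨i, Nat.lt_of_succ_lt h⟩ ⟨i + 1, h⟩))) :
    ∑ w : Equiv.Perm (Fin n), (-1 : Kf n) ^ lenf n w * G w
      = ∏ i : Fin n, (1 - Xf n i) ^ (n - 1 - i.val) := by
  classical
  open SSG in
  have hpoly : ∀ w : Equiv.Perm (Fin n),
      ∃ g : MvPolynomial (Fin n) ℚ, SSG.φ n g = G w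
        ∧ g.totalDegree ≤ ∑ t : Fin n, (n - 1 - (t : ℕ))
        ∧ (w ≠ Fin.revPerm → g.totalDegree < ∑ t : Fin n, (n - 1 - (t : ℕ))) := by
    intro w
    exact SSG.hpoly_aux G htop hrec (∑ t : Fin n, (n - 1 - (t : ℕ))) w (by omega)
  choose g hg1 hg2 hg3 using hpoly
  set D := ∑ t : Fin n, (n - 1 - (t : ℕ)) with hD
  set spoly : MvPolynomial (Fin n) ℚ :=
    ∑ w : Equiv.Perm (Fin n), (-1 : MvPolynomial (Fin n) ℚ) ^ lenf n w * g w with hspoly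
  have hneg : ∀ l : ℕ, ((-1 : MvPolynomial (Fin n) ℚ)) ^ l = C ((-1 : ℚ) ^ l) := by
    intro l
    rw [show ((-1 : MvPolynomial (Fin n) ℚ)) = C (-1 : ℚ) by simp, ← C_pow]
  have hφs : SSG.φ n spoly = ∑ w : Equiv.Perm (Fin n), (-1 : Kf n) ^ lenf n w * G w := by
    rw [hspoly, map_sum]
    apply Finset.sum_congr rfl
    intro w _
    rw [map_mul, map_pow, map_neg, map_one, hg1]
  have hdeg : spoly.totalDegree ≤ D := by
    rw [hspoly]
    refine (totalDegree_finset_sum _ _).trans (Finset.sup_le ?_)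
    intro w _
    refine (totalDegree_mul _ _).trans ?_
    rw [hneg, totalDegree_C, zero_add]
    exact hg2 w
  have hgrev : g Fin.revPerm = SSG.xdelta n := by
    apply SSG.φ_inj
    rw [hg1, htop, SSG.phi_xdelta]
  have hcoeff : coeff (SSG.delta n) spoly = (-1 : ℚ) ^ D := by
    rw [hspoly, coeff_sum]
    rw [Finset.sum_eq_single Fin.revPerm]
    · rw [hgrev, hneg, coeff_C_mul, SSG.coeff_delta_xdelta, mul_one, SSG.lenf_rev, hD]
    · intro w _ hne
      rw [hneg, coeff_C_mul]
      rw [coeff_eq_zero_of_totalDegree_lt, mul_zero]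
      calc (g w).totalDegree < D := hg3 w hne
        _ = (SSG.delta n).sum fun _ e => e := SSG.delta_degree.symm
    · intro hne
      exact absurd (Finset.mem_univ _) hne
  have hrel : ∀ (i : ℕ) (h : i + 1 < n),
      (1 - X (⟨i + 1, h⟩ : Fin n)) * spoly
        = (1 - X (⟨i, Nat.lt_of_succ_lt h⟩ : Fin n))
          * rename (Equiv.swap (⟨i, Nat.lt_of_succ_lt h⟩ : Fin n) ⟨i + 1, h⟩) spoly := by
    intro i h
    apply SSG.φ_inj
    have hfe := SSG.funct_eq G hrec i h
    calc SSG.φ n ((1 - X (⟨i + 1, h⟩ : Fin n)) * spoly)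
        = (1 - Xf n ⟨i + 1, h⟩) * (∑ w : Equiv.Perm (Fin n), (-1 : Kf n) ^ lenf n w * G w) := by
          rw [map_mul, map_sub, map_one, hφs]; rfl
      _ = (1 - Xf n ⟨i, Nat.lt_of_succ_lt h⟩)
          * swapf n ⟨i, Nat.lt_of_succ_lt h⟩ ⟨i + 1, h⟩
            (∑ w : Equiv.Perm (Fin n), (-1 : Kf n) ^ lenf n w * G w) := hfe
      _ = SSG.φ n ((1 - X (⟨i, Nat.lt_of_succ_lt h⟩ : Fin n))
          * rename (Equiv.swap (⟨i, Nat.lt_of_succ_lt h⟩ : Fin n) ⟨i + 1, h⟩) spoly) := by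
          rw [map_mul, map_sub, map_one, ← SSG.swapf_algebraMap, hφs]; rfl
  have hdvd : SSG.pdelta n ∣ spoly := SSG.pdelta_dvd spoly hrel
  have hfinal : spoly = SSG.pdelta n := SSG.s_eq_pdelta hdvd hdeg hcoeff
  rw [← hφs, hfinal, SSG.pdelta, map_prod]
  apply Finset.prod_congr rfl
  intro k _
  rw [map_pow, map_sub, map_one]
  rfl
end
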